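/- The ℓ-page stack layout ⟨≺_H, σ_H⟩ of the host graph H constructed from an instance (G_C, k, (V_1,…,V_k)) of Multi-colored Clique as described in the context has page width at most 3; that is, for every page p and every pair of ≺_H-consecutive vertices w ≺_H w', at most 3 pairs {u, v} assigned to page p satisfy u ⪯_H w and w' ⪯_H v. -/
import Mathlib


/-- The vertices of the W[1]-hardness construction: host vertices `u α j`
(`u 0 0`, `u α j` for `1 ≤ α ≤ k` and `0 ≤ j ≤ n α + 1`, and `u (k+1) 0`, `u (k+1) 1`).
All indices are 1-based as in the paper. -/
inductive CliqueVtx : Type where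
  | u (α : ℕ) (j : ℕ)
  | x (α : ℕ)
deriving DecidableEq

/-- Start position of the block of color `α` on the spine. -/
def cOffset (n : ℕ → ℕ) (α : ℕ) : ℕ :=
  ∑ β ∈ Finset.range α, (if β = 0 then 1 else n β + 2)

/-- The host spine order: `u 0 0 ≺ u 1 0 ≺ u 1 1 ≺ … ≺ u 1 (n 1 + 1) ≺ u 2 0 ≺ …
≺ u k (n k + 1) ≺ u (k+1) 0 ≺ u (k+1) 1`. -/
def cPos (n : ℕ → ℕ) : CliqueVtx → ℕ
  | .u α j => cOffset n α + j
  | .x _ => 0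

/-- The host vertices, i.e. `V(H)`. -/
def cHost (k : ℕ) (n : ℕ → ℕ) : CliqueVtx → Prop
  | .u α j => (α = 0 ∧ j = 0) ∨ (1 ≤ α ∧ α ≤ k ∧ j ≤ n α + 1) ∨ (α = k + 1 ∧ j ≤ 1)
  | .x _ => False

/-- `bV k n α` is the `≺_H`-predecessor of `u α 0`, for `1 ≤ α ≤ k + 1`. -/
def bV (n : ℕ → ℕ) (α : ℕ) : CliqueVtx :=
  if α = 1 then .u 0 0 else .u (α - 1) (n (α - 1) + 1)

/-- `aV k α` is the `≺_H`-successor of `u α 0`, for `1 ≤ α ≤ k + 1`. -/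
def aV (k : ℕ) (α : ℕ) : CliqueVtx :=
  if α = k + 1 then .u (k + 1) 1 else .u α 1

/-- The host page assignment (per-page-edge-set model).  The pages are one page `p_e`
per edge `e ∈ E(G_C)` together with the distinguished page `p_d`, encoded as
`Option {e // e ∈ EC}`, with `none` being `p_d` (so `ℓ = |E(G_C)| + 1`). -/
def cHostPage (k : ℕ) (n : ℕ → ℕ) (EC : Set (Sym2 (ℕ × ℕ))) :
    Option {e : Sym2 (ℕ × ℕ) // e ∈ EC} → Sym2 CliqueVtx → Prop
  | none, ep =>
      (∃ α, 1 ≤ α ∧ α ≤ k + 1 ∧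
        (ep = s(bV n α, CliqueVtx.u α 0) ∨ ep = s(CliqueVtx.u α 0, aV k α))) ∨
      (∃ α, 1 ≤ α ∧ α ≤ k ∧ ep = s(CliqueVtx.u α 0, CliqueVtx.u (α + 1) 0)) ∨
      ep = s(CliqueVtx.u 0 0, CliqueVtx.u (k + 1) 1)
  | some e, ep =>
      (∃ α, 1 ≤ α ∧ α ≤ k + 1 ∧ ep = s(bV n α, aV k α)) ∨
      (∃ α i β j, e.1 = s((α, i), (β, j)) ∧ α < β ∧
        ((∃ γ, 1 ≤ γ ∧ γ ≤ k ∧ γ ≠ α ∧ γ ≠ β ∧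
            ep = s(CliqueVtx.u γ 1, CliqueVtx.u γ (n γ + 1))) ∨
         (1 < i ∧ ep = s(CliqueVtx.u α 1, CliqueVtx.u α i)) ∨
         (i < n α ∧ ep = s(CliqueVtx.u α (i + 1), CliqueVtx.u α (n α + 1))) ∨
         (1 < j ∧ ep = s(CliqueVtx.u β 1, CliqueVtx.u β j)) ∨
         (j < n β ∧ ep = s(CliqueVtx.u β (j + 1), CliqueVtx.u β (n β + 1))) ∨
         ep = s(CliqueVtx.u α i, CliqueVtx.u β (j + 1)) ∨
         ep = s(CliqueVtx.u α (i + 1), CliqueVtx.u β j)))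

lemma cOffset_succ (n : ℕ → ℕ) (α : ℕ) :
    cOffset n (α + 1) = cOffset n α + (if α = 0 then 1 else n α + 2) :=
  Finset.sum_range_succ _ α

lemma cOffset_le (n : ℕ → ℕ) {α β : ℕ} (h : α ≤ β) : cOffset n α ≤ cOffset n β :=
  Finset.sum_le_sum_of_subset (Finset.range_subset_range.2 h)

lemma cOffset_step (n : ℕ → ℕ) {γ δ : ℕ} (h1 : 1 ≤ γ) (h2 : γ < δ) :
    cOffset n γ + n γ + 2 ≤ cOffset n δ := by
  have h3 : cOffset n (γ + 1) ≤ cOffset n δ := cOffset_le n h2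
  rw [cOffset_succ, if_neg (by omega)] at h3
  omega

lemma cOffset_inj (n : ℕ → ℕ) {γ1 γ2 : ℕ} (h1 : 1 ≤ γ1) (h2 : 1 ≤ γ2)
    (h : cOffset n γ1 = cOffset n γ2) : γ1 = γ2 := by
  rcases Nat.lt_trichotomy γ1 γ2 with hlt | he | hlt
  · have := cOffset_step n h1 hlt; omega
  · exact he
  · have := cOffset_step n h2 hlt; omega

lemma cOffset_ne_succ (n : ℕ → ℕ) {γ1 γ2 : ℕ} (h1 : 1 ≤ γ1) (h2 : 1 ≤ γ2) :
    cOffset n γ1 ≠ cOffset n γ2 + 1 := by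
  intro h
  rcases Nat.lt_or_ge γ2 γ1 with hlt | hle
  · have := cOffset_step n h2 hlt; omega
  · have := cOffset_le n hle; omega

lemma bV_pos (n : ℕ → ℕ) {γ : ℕ} (h : 1 ≤ γ) : cPos n (bV n γ) + 1 = cOffset n γ := by
  unfold bV
  split
  · next h1 => subst h1; simp [cPos, cOffset]
  · next h1 =>
      have h2 : γ - 1 + 1 = γ := by omega
      have h3 := cOffset_succ n (γ - 1)
      rw [h2, if_neg (by omega)] at h3
      simp only [cPos]
      omega

lemma aV_pos (k : ℕ) (n : ℕ → ℕ) (γ : ℕ) : cPos n (aV k γ) = cOffset n γ + 1 := by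
  unfold aV
  split
  · next h1 => subst h1; rfl
  · rfl

lemma span_pair {n : ℕ → ℕ} {g G : ℕ} {ep : Sym2 CliqueVtx} {x y : CliqueVtx}
    (hspan : ∃ a b, ep = s(a, b) ∧ cPos n a ≤ g ∧ G ≤ cPos n b)
    (h : ep = s(x, y)) :
    (cPos n x ≤ g ∧ G ≤ cPos n y) ∨ (cPos n y ≤ g ∧ G ≤ cPos n x) := by
  obtain ⟨a, b, hab, h1, h2⟩ := hspan
  rw [h, Sym2.eq_iff] at hab
  rcases hab with ⟨rfl, rfl⟩ | ⟨rfl, rfl⟩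
  · exact Or.inl ⟨h1, h2⟩
  · exact Or.inr ⟨h1, h2⟩

lemma decomp_unique {α i β j α' i' β' j' : ℕ}
    (h : (s((α, i), (β, j)) : Sym2 (ℕ × ℕ)) = s((α', i'), (β', j')))
    (h1 : α < β) (h2 : α' < β') : α' = α ∧ i' = i ∧ β' = β ∧ j' = j := by
  rw [Sym2.eq_iff] at h
  rcases h with ⟨ha, hb⟩ | ⟨ha, hb⟩ <;>
    simp only [Prod.mk.injEq] at ha hb <;> omega

lemma ncard_le_three_of_subset {S : Set (Sym2 CliqueVtx)} {a b c : Sym2 CliqueVtx}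
    (h : S ⊆ {a, b, c}) : S.ncard ≤ 3 := by
  have hfin : ({a, b, c} : Set (Sym2 CliqueVtx)).Finite :=
    ((Set.finite_singleton c).insert b).insert a
  have h1 := Set.ncard_le_ncard h hfin
  have h2 := Set.ncard_insert_le a ({b, c} : Set (Sym2 CliqueVtx))
  have h3 := Set.ncard_insert_le b ({c} : Set (Sym2 CliqueVtx))
  have h4 : ({c} : Set (Sym2 CliqueVtx)).ncard = 1 := Set.ncard_singleton c
  omega

lemma exists_unique_rep {P : Sym2 CliqueVtx → Prop} (hP : ∀ e1 e2, P e1 → P e2 → e1 = e2) :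
    ∃ E, ∀ e, P e → e = E := by
  classical
  by_cases h : ∃ e, P e
  · exact ⟨h.choose, fun e he => hP e h.choose he h.choose_spec⟩
  · exact ⟨s(.x 0, .x 0), fun e he => absurd ⟨e, he⟩ h⟩

/-! ### Page `p_d` (the `none` page) -/

lemma key0 (k : ℕ) (n : ℕ → ℕ) {g G : ℕ} (hgG : g < G) (γ : ℕ) (ep : Sym2 CliqueVtx)
    (h1 : 1 ≤ γ)
    (hf : ep = s(bV n γ, CliqueVtx.u γ 0) ∨ ep = s(CliqueVtx.u γ 0, aV k γ))
    (hs : ∃ a b, ep = s(a, b) ∧ cPos n a ≤ g ∧ G ≤ cPos n b) :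
    (ep = s(bV n γ, CliqueVtx.u γ 0) ∧ g + 1 = cOffset n γ) ∨
    (ep = s(CliqueVtx.u γ 0, aV k γ) ∧ g = cOffset n γ) := by
  have hb := bV_pos n h1
  have ha := aV_pos k n γ
  have hu : cPos n (CliqueVtx.u γ 0) = cOffset n γ + 0 := rfl
  rcases hf with hf | hf
  · rcases span_pair hs hf with ⟨u1, u2⟩ | ⟨u1, u2⟩
    · exact Or.inl ⟨hf, by omega⟩
    · exact absurd (by omega : (1:ℕ) = 0) (by omega)
  · rcases span_pair hs hf with ⟨u1, u2⟩ | ⟨u1, u2⟩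
    · exact Or.inr ⟨hf, by omega⟩
    · exact absurd (by omega : (1:ℕ) = 0) (by omega)

lemma uniq0 (k : ℕ) (n : ℕ → ℕ) {g G : ℕ} (hgG : g < G)
    {ep1 ep2 : Sym2 CliqueVtx} {γ1 γ2 : ℕ}
    (ha1 : 1 ≤ γ1) (ha2 : 1 ≤ γ2)
    (hf1 : ep1 = s(bV n γ1, CliqueVtx.u γ1 0) ∨ ep1 = s(CliqueVtx.u γ1 0, aV k γ1))
    (hf2 : ep2 = s(bV n γ2, CliqueVtx.u γ2 0) ∨ ep2 = s(CliqueVtx.u γ2 0, aV k γ2))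
    (hs1 : ∃ a b, ep1 = s(a, b) ∧ cPos n a ≤ g ∧ G ≤ cPos n b)
    (hs2 : ∃ a b, ep2 = s(a, b) ∧ cPos n a ≤ g ∧ G ≤ cPos n b) :
    ep1 = ep2 := by
  rcases key0 k n hgG γ1 ep1 ha1 hf1 hs1 with ⟨he1, hg1⟩ | ⟨he1, hg1⟩ <;>
  rcases key0 k n hgG γ2 ep2 ha2 hf2 hs2 with ⟨he2, hg2⟩ | ⟨he2, hg2⟩
  · have hγ : γ1 = γ2 := cOffset_inj n ha1 ha2 (by omega)
    rw [he1, he2, hγ]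
  · exact absurd (by omega : cOffset n γ1 = cOffset n γ2 + 1) (cOffset_ne_succ n ha1 ha2)
  · exact absurd (by omega : cOffset n γ2 = cOffset n γ1 + 1) (cOffset_ne_succ n ha2 ha1)
  · have hγ : γ1 = γ2 := cOffset_inj n ha1 ha2 (by omega)
    rw [he1, he2, hγ]

lemma uniq1 (k : ℕ) (n : ℕ → ℕ) {g G : ℕ} (hgG : g < G)
    {ep1 ep2 : Sym2 CliqueVtx} {γ1 γ2 : ℕ}
    (ha1 : 1 ≤ γ1) (ha2 : 1 ≤ γ2)
    (hf1 : ep1 = s(CliqueVtx.u γ1 0, CliqueVtx.u (γ1 + 1) 0))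
    (hf2 : ep2 = s(CliqueVtx.u γ2 0, CliqueVtx.u (γ2 + 1) 0))
    (hs1 : ∃ a b, ep1 = s(a, b) ∧ cPos n a ≤ g ∧ G ≤ cPos n b)
    (hs2 : ∃ a b, ep2 = s(a, b) ∧ cPos n a ≤ g ∧ G ≤ cPos n b) :
    ep1 = ep2 := by
  have key : ∀ (γ : ℕ) (ep : Sym2 CliqueVtx), 1 ≤ γ →
      ep = s(CliqueVtx.u γ 0, CliqueVtx.u (γ + 1) 0) →
      (∃ a b, ep = s(a, b) ∧ cPos n a ≤ g ∧ G ≤ cPos n b) →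
      cOffset n γ ≤ g ∧ g + 1 ≤ cOffset n (γ + 1) := by
    intro γ ep h1 hf hs
    have p1 : cPos n (CliqueVtx.u γ 0) = cOffset n γ + 0 := rfl
    have p2 : cPos n (CliqueVtx.u (γ + 1) 0) = cOffset n (γ + 1) + 0 := rfl
    have hst := cOffset_step n h1 (lt_add_one γ)
    rcases span_pair hs hf with ⟨u1, u2⟩ | ⟨u1, u2⟩ <;> omega
  have k1 := key γ1 ep1 ha1 hf1 hs1
  have k2 := key γ2 ep2 ha2 hf2 hs2
  have hγ : γ1 = γ2 := by
    rcases Nat.lt_trichotomy γ1 γ2 with hlt | he | hlt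
    · have := cOffset_le n (show γ1 + 1 ≤ γ2 by omega); omega
    · exact he
    · have := cOffset_le n (show γ2 + 1 ≤ γ1 by omega); omega
  rw [hf1, hf2, hγ]

/-! ### Pages `p_e` -/

lemma extractA (k : ℕ) (n : ℕ → ℕ) {g G : ℕ} (hgG : g < G)
    (α i β j : ℕ) (hα1 : 1 ≤ α) (hαβ : α < β) (hβk : β ≤ k)
    (hi1 : 1 ≤ i) (hik : i ≤ n α) (hj1 : 1 ≤ j) (hjk : j ≤ n β)
    (ep : Sym2 CliqueVtx)
    (hf : (∃ γ, 1 ≤ γ ∧ γ ≤ k + 1 ∧ ep = s(bV n γ, aV k γ)) ∨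
       (∃ γ, 1 ≤ γ ∧ γ ≤ k ∧ γ ≠ α ∧ γ ≠ β ∧ ep = s(CliqueVtx.u γ 1, CliqueVtx.u γ (n γ + 1))) ∨
       (1 < i ∧ ep = s(CliqueVtx.u α 1, CliqueVtx.u α i)) ∨
       (i < n α ∧ ep = s(CliqueVtx.u α (i + 1), CliqueVtx.u α (n α + 1))) ∨
       (1 < j ∧ ep = s(CliqueVtx.u β 1, CliqueVtx.u β j)) ∨
       (j < n β ∧ ep = s(CliqueVtx.u β (j + 1), CliqueVtx.u β (n β + 1))))
    (hs : ∃ a b, ep = s(a, b) ∧ cPos n a ≤ g ∧ G ≤ cPos n b) :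
    (∃ γ, 1 ≤ γ ∧ ep = s(bV n γ, aV k γ) ∧
        cOffset n γ ≤ g + 1 ∧ g + 1 ≤ cOffset n γ + 1) ∨
    (∃ γ s t, 1 ≤ γ ∧ 1 ≤ s ∧ ep = s(CliqueVtx.u γ s, CliqueVtx.u γ t) ∧
        cOffset n γ + s ≤ g ∧ g + 1 ≤ cOffset n γ + t ∧ t ≤ n γ + 1 ∧
        ((γ ≠ α ∧ γ ≠ β ∧ s = 1 ∧ t = n γ + 1) ∨
         (γ = α ∧ s = 1 ∧ t = i) ∨
         (γ = α ∧ s = i + 1 ∧ t = n α + 1) ∨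
         (γ = β ∧ s = 1 ∧ t = j) ∨
         (γ = β ∧ s = j + 1 ∧ t = n β + 1))) := by
  rcases hf with ⟨γ, h1, h2, hf⟩ | ⟨γ, h1, h2, h3, h4, hf⟩ | ⟨hlt, hf⟩ | ⟨hlt, hf⟩ | ⟨hlt, hf⟩ | ⟨hlt, hf⟩
  · left
    have hb := bV_pos n h1
    have ha := aV_pos k n γ
    rcases span_pair hs hf with ⟨u1, u2⟩ | ⟨u1, u2⟩
    · exact ⟨γ, h1, hf, by omega, by omega⟩
    · exact absurd (by omega : (1:ℕ) = 0) (by omega)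
  · right
    have p1 : cPos n (CliqueVtx.u γ 1) = cOffset n γ + 1 := rfl
    have p2 : cPos n (CliqueVtx.u γ (n γ + 1)) = cOffset n γ + (n γ + 1) := rfl
    rcases span_pair hs hf with ⟨u1, u2⟩ | ⟨u1, u2⟩
    · exact ⟨γ, 1, n γ + 1, h1, le_refl 1, hf, by omega, by omega, by omega,
        Or.inl ⟨h3, h4, rfl, rfl⟩⟩
    · exact absurd (by omega : (1:ℕ) = 0) (by omega)
  · right
    have p1 : cPos n (CliqueVtx.u α 1) = cOffset n α + 1 := rfl
    have p2 : cPos n (CliqueVtx.u α i) = cOffset n α + i := rfl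
    rcases span_pair hs hf with ⟨u1, u2⟩ | ⟨u1, u2⟩
    · exact ⟨α, 1, i, hα1, le_refl 1, hf, by omega, by omega, by omega,
        Or.inr (Or.inl ⟨rfl, rfl, rfl⟩)⟩
    · exact absurd (by omega : (1:ℕ) = 0) (by omega)
  · right
    have p1 : cPos n (CliqueVtx.u α (i + 1)) = cOffset n α + (i + 1) := rfl
    have p2 : cPos n (CliqueVtx.u α (n α + 1)) = cOffset n α + (n α + 1) := rfl
    rcases span_pair hs hf with ⟨u1, u2⟩ | ⟨u1, u2⟩
    · exact ⟨α, i + 1, n α + 1, hα1, by omega, hf, by omega, by omega, by omega,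
        Or.inr (Or.inr (Or.inl ⟨rfl, rfl, rfl⟩))⟩
    · exact absurd (by omega : (1:ℕ) = 0) (by omega)
  · right
    have p1 : cPos n (CliqueVtx.u β 1) = cOffset n β + 1 := rfl
    have p2 : cPos n (CliqueVtx.u β j) = cOffset n β + j := rfl
    rcases span_pair hs hf with ⟨u1, u2⟩ | ⟨u1, u2⟩
    · exact ⟨β, 1, j, by omega, le_refl 1, hf, by omega, by omega, by omega,
        Or.inr (Or.inr (Or.inr (Or.inl ⟨rfl, rfl, rfl⟩)))⟩
    · exact absurd (by omega : (1:ℕ) = 0) (by omega)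
  · right
    have p1 : cPos n (CliqueVtx.u β (j + 1)) = cOffset n β + (j + 1) := rfl
    have p2 : cPos n (CliqueVtx.u β (n β + 1)) = cOffset n β + (n β + 1) := rfl
    rcases span_pair hs hf with ⟨u1, u2⟩ | ⟨u1, u2⟩
    · exact ⟨β, j + 1, n β + 1, by omega, by omega, hf, by omega, by omega, by omega,
        Or.inr (Or.inr (Or.inr (Or.inr ⟨rfl, rfl, rfl⟩)))⟩
    · exact absurd (by omega : (1:ℕ) = 0) (by omega)

lemma uniqA (k : ℕ) (n : ℕ → ℕ) {g G : ℕ} (hgG : g < G)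
    (α i β j : ℕ) (hα1 : 1 ≤ α) (hαβ : α < β) (hβk : β ≤ k)
    (hi1 : 1 ≤ i) (hik : i ≤ n α) (hj1 : 1 ≤ j) (hjk : j ≤ n β)
    (ep1 ep2 : Sym2 CliqueVtx)
    (hf1 : (∃ γ, 1 ≤ γ ∧ γ ≤ k + 1 ∧ ep1 = s(bV n γ, aV k γ)) ∨
       (∃ γ, 1 ≤ γ ∧ γ ≤ k ∧ γ ≠ α ∧ γ ≠ β ∧ ep1 = s(CliqueVtx.u γ 1, CliqueVtx.u γ (n γ + 1))) ∨
       (1 < i ∧ ep1 = s(CliqueVtx.u α 1, CliqueVtx.u α i)) ∨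
       (i < n α ∧ ep1 = s(CliqueVtx.u α (i + 1), CliqueVtx.u α (n α + 1))) ∨
       (1 < j ∧ ep1 = s(CliqueVtx.u β 1, CliqueVtx.u β j)) ∨
       (j < n β ∧ ep1 = s(CliqueVtx.u β (j + 1), CliqueVtx.u β (n β + 1))))
    (hs1 : ∃ a b, ep1 = s(a, b) ∧ cPos n a ≤ g ∧ G ≤ cPos n b)
    (hf2 : (∃ γ, 1 ≤ γ ∧ γ ≤ k + 1 ∧ ep2 = s(bV n γ, aV k γ)) ∨
       (∃ γ, 1 ≤ γ ∧ γ ≤ k ∧ γ ≠ α ∧ γ ≠ β ∧ ep2 = s(CliqueVtx.u γ 1, CliqueVtx.u γ (n γ + 1))) ∨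
       (1 < i ∧ ep2 = s(CliqueVtx.u α 1, CliqueVtx.u α i)) ∨
       (i < n α ∧ ep2 = s(CliqueVtx.u α (i + 1), CliqueVtx.u α (n α + 1))) ∨
       (1 < j ∧ ep2 = s(CliqueVtx.u β 1, CliqueVtx.u β j)) ∨
       (j < n β ∧ ep2 = s(CliqueVtx.u β (j + 1), CliqueVtx.u β (n β + 1))))
    (hs2 : ∃ a b, ep2 = s(a, b) ∧ cPos n a ≤ g ∧ G ≤ cPos n b) :
    ep1 = ep2 := by
  rcases extractA k n hgG α i β j hα1 hαβ hβk hi1 hik hj1 hjk ep1 hf1 hs1 with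
    ⟨γ1, ha1, he1, hc1, hd1⟩ | ⟨γ1, s1, t1, ha1, hb1, he1, hc1, hd1, ht1, hD1⟩ <;>
  rcases extractA k n hgG α i β j hα1 hαβ hβk hi1 hik hj1 hjk ep2 hf2 hs2 with
    ⟨γ2, ha2, he2, hc2, hd2⟩ | ⟨γ2, s2, t2, ha2, hb2, he2, hc2, hd2, ht2, hD2⟩
  · -- sep, sep
    have hγ : γ1 = γ2 := by
      rcases Nat.lt_trichotomy γ1 γ2 with hlt | he | hlt
      · have := cOffset_step n ha1 hlt; omega
      · exact he
      · have := cOffset_step n ha2 hlt; omega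
    rw [he1, he2, hγ]
  · -- sep, intra : impossible
    exfalso
    rcases Nat.lt_or_ge γ2 γ1 with hlt | hle
    · have := cOffset_step n ha2 hlt; omega
    · have := cOffset_le n hle; omega
  · -- intra, sep : impossible
    exfalso
    rcases Nat.lt_or_ge γ1 γ2 with hlt | hle
    · have := cOffset_step n ha1 hlt; omega
    · have := cOffset_le n hle; omega
  · -- intra, intra
    have hγ : γ1 = γ2 := by
      rcases Nat.lt_trichotomy γ1 γ2 with hlt | he | hlt
      · have := cOffset_step n ha1 hlt; omega
      · exact he
      · have := cOffset_step n ha2 hlt; omega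
    subst hγ
    have hst : s1 = s2 ∧ t1 = t2 := by omega
    rw [he1, he2, hst.1, hst.2]


/-- The host layout of the W[1]-hardness construction has page width
at most `3`: for every page `p` and every pair of `≺_H`-consecutive host vertices
`w ≺ w'`, at most `3` pairs assigned to page `p` span the interval between them. -/
theorem stmt7 (k : ℕ) (n : ℕ → ℕ) (hn : ∀ α, 1 ≤ α → α ≤ k → 1 ≤ n α)
    (EC : Set (Sym2 (ℕ × ℕ)))
    (hEC : ∀ e ∈ EC, ∃ α i β j, e = s((α, i), (β, j)) ∧
      1 ≤ α ∧ α < β ∧ β ≤ k ∧ 1 ≤ i ∧ i ≤ n α ∧ 1 ≤ j ∧ j ≤ n β) :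
    ∀ (p : Option {e : Sym2 (ℕ × ℕ) // e ∈ EC}) (w w' : CliqueVtx),
      cHost k n w → cHost k n w' → cPos n w < cPos n w' →
      (∀ z, cHost k n z → ¬(cPos n w < cPos n z ∧ cPos n z < cPos n w')) →
      Set.ncard {ep : Sym2 CliqueVtx | cHostPage k n EC p ep ∧
        ∃ a b : CliqueVtx, ep = s(a, b) ∧ cPos n a ≤ cPos n w ∧ cPos n w' ≤ cPos n b} ≤ 3 := by
  intro p w w' hw hw' hww hcons
  clear hcons hw hw'
  rcases p with _ | e'
  · -- the distinguished page p_d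
    obtain ⟨E0, hE0⟩ := exists_unique_rep
      (P := fun ep => (∃ γ, 1 ≤ γ ∧ γ ≤ k + 1 ∧
          (ep = s(bV n γ, CliqueVtx.u γ 0) ∨ ep = s(CliqueVtx.u γ 0, aV k γ))) ∧
        ∃ a b, ep = s(a, b) ∧ cPos n a ≤ cPos n w ∧ cPos n w' ≤ cPos n b)
      (by
        rintro e1 e2 ⟨⟨γ1, h11, h12, h13⟩, hsp1⟩ ⟨⟨γ2, h21, h22, h23⟩, hsp2⟩
        exact uniq0 k n hww h11 h21 h13 h23 hsp1 hsp2)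
    obtain ⟨E1, hE1⟩ := exists_unique_rep
      (P := fun ep => (∃ γ, 1 ≤ γ ∧ γ ≤ k ∧
          ep = s(CliqueVtx.u γ 0, CliqueVtx.u (γ + 1) 0)) ∧
        ∃ a b, ep = s(a, b) ∧ cPos n a ≤ cPos n w ∧ cPos n w' ≤ cPos n b)
      (by
        rintro e1 e2 ⟨⟨γ1, h11, h12, h13⟩, hsp1⟩ ⟨⟨γ2, h21, h22, h23⟩, hsp2⟩
        exact uniq1 k n hww h11 h21 h13 h23 hsp1 hsp2)
    apply ncard_le_three_of_subset (a := E0) (b := E1)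
      (c := s(CliqueVtx.u 0 0, CliqueVtx.u (k + 1) 1))
    rintro ep ⟨hpage, hspan⟩
    simp only [cHostPage] at hpage
    rcases hpage with h | h | h
    · rw [hE0 ep ⟨h, hspan⟩]; exact Set.mem_insert _ _
    · rw [hE1 ep ⟨h, hspan⟩]; exact Set.mem_insert_of_mem _ (Set.mem_insert _ _)
    · rw [h]; exact Set.mem_insert_of_mem _ (Set.mem_insert_of_mem _ rfl)
  · -- a page p_e
    obtain ⟨α, i, β, j, heq, hα1, hαβ, hβk, hi1, hik, hj1, hjk⟩ := hEC e'.1 e'.2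
    obtain ⟨EA, hEA⟩ := exists_unique_rep
      (P := fun ep => ((∃ γ, 1 ≤ γ ∧ γ ≤ k + 1 ∧ ep = s(bV n γ, aV k γ)) ∨
         (∃ γ, 1 ≤ γ ∧ γ ≤ k ∧ γ ≠ α ∧ γ ≠ β ∧
            ep = s(CliqueVtx.u γ 1, CliqueVtx.u γ (n γ + 1))) ∨
         (1 < i ∧ ep = s(CliqueVtx.u α 1, CliqueVtx.u α i)) ∨
         (i < n α ∧ ep = s(CliqueVtx.u α (i + 1), CliqueVtx.u α (n α + 1))) ∨
         (1 < j ∧ ep = s(CliqueVtx.u β 1, CliqueVtx.u β j)) ∨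
         (j < n β ∧ ep = s(CliqueVtx.u β (j + 1), CliqueVtx.u β (n β + 1)))) ∧
        ∃ a b, ep = s(a, b) ∧ cPos n a ≤ cPos n w ∧ cPos n w' ≤ cPos n b)
      (by
        rintro e1 e2 ⟨hf1, hsp1⟩ ⟨hf2, hsp2⟩
        exact uniqA k n hww α i β j hα1 hαβ hβk hi1 hik hj1 hjk e1 e2 hf1 hsp1 hf2 hsp2)
    apply ncard_le_three_of_subset (a := EA)
      (b := s(CliqueVtx.u α i, CliqueVtx.u β (j + 1)))
      (c := s(CliqueVtx.u α (i + 1), CliqueVtx.u β j))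
    rintro ep ⟨hpage, hspan⟩
    simp only [cHostPage] at hpage
    rcases hpage with h | ⟨α', i', β', j', he2, hlt', hcase⟩
    · rw [hEA ep ⟨Or.inl h, hspan⟩]; exact Set.mem_insert _ _
    · have he3 : (s((α, i), (β, j)) : Sym2 (ℕ × ℕ)) = s((α', i'), (β', j')) := by
        rw [← heq]; exact he2
      obtain ⟨rfl, rfl, rfl, rfl⟩ := decomp_unique he3 hαβ hlt'
      rcases hcase with h | h | h | h | h | h | h
      · rw [hEA ep ⟨Or.inr (Or.inl h), hspan⟩]; exact Set.mem_insert _ _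
      · rw [hEA ep ⟨Or.inr (Or.inr (Or.inl h)), hspan⟩]; exact Set.mem_insert _ _
      · rw [hEA ep ⟨Or.inr (Or.inr (Or.inr (Or.inl h))), hspan⟩]; exact Set.mem_insert _ _
      · rw [hEA ep ⟨Or.inr (Or.inr (Or.inr (Or.inr (Or.inl h)))), hspan⟩]
        exact Set.mem_insert _ _
      · rw [hEA ep ⟨Or.inr (Or.inr (Or.inr (Or.inr (Or.inr h)))), hspan⟩]
        exact Set.mem_insert _ _
      · rw [h]; exact Set.mem_insert_of_mem _ (Set.mem_insert _ _)
      · rw [h]; exact Set.mem_insert_of_mem _ (Set.mem_insert_of_mem _ rfl)
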